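/- For all θ with 1/2 < θ < 1, one has −ln(1+θ)/ln(θ) > θ²/(1−θ²). -/

import Mathlib

/-- For all `1/2 < θ < 1`: `−ln(1+θ)/ln(θ) > θ²/(1−θ²)`. -/
theorem log_ratio_inequality (θ : ℝ) (hθ : 1 / 2 < θ) (hθ1 : θ < 1) :
    -(Real.log (1 + θ)) / Real.log θ > θ ^ 2 / (1 - θ ^ 2) := by
  have h0 : (0:ℝ) < θ := by linarith
  have hb : 0 < -Real.log θ := by
    have := Real.log_neg h0 hθ1
    linarith
  have hc : 0 < 1 - θ ^ 2 := by nlinarith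
  have h1θ : (0:ℝ) < 1 + θ := by linarith
  -- lower bound log(1+θ) > θ/(1+θ)
  have h1 : Real.log (1 + θ) > θ / (1 + θ) := by
    have hpos : (0:ℝ) < 1/(1+θ) := by positivity
    have hne : (1:ℝ)/(1+θ) ≠ 1 := by
      intro h
      field_simp at h
      linarith
    have h := Real.log_lt_sub_one_of_pos hpos hne
    rw [Real.log_div one_ne_zero (ne_of_gt h1θ), Real.log_one] at h
    have h2 : 1/(1+θ) - 1 = -(θ/(1+θ)) := by field_simp; ring
    rw [h2] at h
    linarith
  -- lower bound log θ ≥ (θ-1)/θ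
  have h2 : Real.log θ ≥ (θ - 1)/θ := by
    have h := Real.log_le_sub_one_of_pos (show (0:ℝ) < 1/θ by positivity)
    rw [Real.log_div one_ne_zero (ne_of_gt h0), Real.log_one] at h
    have he : 1/θ - 1 = -((θ-1)/θ) := by field_simp; ring
    rw [he] at h
    linarith
  rw [show -(Real.log (1+θ))/Real.log θ = Real.log (1+θ)/(-Real.log θ) from by
    rw [div_neg, neg_div]]
  rw [gt_iff_lt, div_lt_div_iff₀ hc hb]
  have k1 : Real.log (1+θ) * (1 - θ^2) > (θ/(1+θ)) * (1 - θ^2) := by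
    exact mul_lt_mul_of_pos_right h1 hc
  have e1 : (θ/(1+θ)) * (1 - θ^2) = θ * (1 - θ) := by
    field_simp
    ring
  have k2 : θ^2 * (-Real.log θ) ≤ θ^2 * ((1-θ)/θ) := by
    apply mul_le_mul_of_nonneg_left _ (by positivity)
    have : (θ-1)/θ = -((1-θ)/θ) := by ring
    linarith [this ▸ h2]
  have e2 : θ^2 * ((1-θ)/θ) = θ * (1 - θ) := by
    field_simp
  nlinarith
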